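/- For the arithmetic sequence a_n = n!, the statistically characterized subgroup t^s_{(d_n)}(T) has cardinality of the continuum. -/

import Mathlib

open Filter Topology Set

noncomputable section

/-- The sequence of ratios `b n = a n / a (n-1)` of an arithmetic sequence. -/
def ratios (a : ℕ → ℕ) (n : ℕ) : ℕ := a n / a (n - 1)

/-- An arithmetic sequence: `a 0 = 1`, strictly increasing, each term divides the next. -/
def IsArithSeq (a : ℕ → ℕ) : Prop :=
  a 0 = 1 ∧ (∀ n, a n < a (n + 1)) ∧ (∀ n, a n ∣ a (n + 1))

/-- The indices `n_k` with `a k = d (n k)`: `n 0 = 1`, `n (k+1) = n k + (b (k+1) - 1)`. -/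
def nseq (a : ℕ → ℕ) : ℕ → ℕ
  | 0 => 1
  | k + 1 => nseq a k + (ratios a (k + 1) - 1)

/-- The lifting function `L(A) = ⋃_{k ∈ A} [n_{k-1}, n_k - 1]`. -/
def liftSet (a : ℕ → ℕ) (A : Set ℕ) : Set ℕ :=
  ⋃ k ∈ A, Set.Icc (nseq a (k - 1)) (nseq a k - 1)

/-- `A ⊆ ℕ` has natural density `δ`. -/
def HasDensity (A : Set ℕ) (δ : ℝ) : Prop :=
  Tendsto (fun n : ℕ => ((A ∩ Set.Iio n).ncard : ℝ) / n) atTop (𝓝 δ)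

/-- The upper natural density of `A ⊆ ℕ`. -/
def upperDensity (A : Set ℕ) : ℝ :=
  limsup (fun n : ℕ => ((A ∩ Set.Iio n).ncard : ℝ) / n) atTop

/-- The sequence `(d n)`: the increasing enumeration of `{r * a k : k ≥ 0, 1 ≤ r < b (k+1)}`. -/
def dSeq (a : ℕ → ℕ) : ℕ → ℕ :=
  Nat.nth (fun m => ∃ k r : ℕ, 1 ≤ r ∧ r < ratios a (k + 1) ∧ m = r * a k)

/-- The characterized subgroup `t_{(u n)}(𝕋)`. -/
def charSub (u : ℕ → ℤ) : Set (AddCircle (1 : ℝ)) :=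
  {x | Tendsto (fun n => u n • x) atTop (𝓝 0)}

/-- The statistically characterized subgroup `t^s_{(u n)}(𝕋)`. -/
def statChar (u : ℕ → ℤ) : Set (AddCircle (1 : ℝ)) :=
  {x | ∀ ε : ℝ, 0 < ε → HasDensity {n : ℕ | ε ≤ ‖u n • x‖} 0}

/-- Density lifting invariant. -/
def Dli (a : ℕ → ℕ) : Prop :=
  ∀ A : Set ℕ, A.Infinite → HasDensity A 0 → HasDensity (liftSet a A) 0

/-- Weakly density lifting invariant. -/
def WeaklyDli (a : ℕ → ℕ) : Prop :=
  ∃ A : Set ℕ, A.Infinite ∧ ∀ m : ℕ, HasDensity (liftSet a ((fun x => x - m) '' A)) 0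

/-- Strongly non density lifting invariant. -/
def StronglyNonDli (a : ℕ → ℕ) : Prop :=
  ∀ A : Set ℕ, A.Infinite → 0 < upperDensity (liftSet a A)

namespace SCF

open Nat

/-- the predicate defining the values of `dSeq Nat.factorial` -/
def Pp (m : ℕ) : Prop :=
  ∃ k r : ℕ, 1 ≤ r ∧ r < ratios Nat.factorial (k + 1) ∧ m = r * Nat.factorial k

lemma dSeq_factorial_eq : dSeq Nat.factorial = Nat.nth Pp := rfl

lemma ratios_factorial (k : ℕ) : ratios Nat.factorial (k + 1) = k + 1 := by
  simp only [ratios, Nat.add_sub_cancel, Nat.factorial_succ]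
  exact Nat.mul_div_cancel _ (Nat.factorial_pos k)

lemma Pp_iff (m : ℕ) : Pp m ↔ ∃ k r : ℕ, 1 ≤ r ∧ r ≤ k ∧ m = r * Nat.factorial k := by
  constructor
  · rintro ⟨k, r, h1, h2, rfl⟩
    rw [ratios_factorial] at h2
    exact ⟨k, r, h1, by omega, rfl⟩
  · rintro ⟨k, r, h1, h2, rfl⟩
    exact ⟨k, r, h1, by rw [ratios_factorial]; omega, rfl⟩

lemma Pp_infinite : (setOf Pp).Infinite := by
  apply Set.infinite_of_injective_forall_mem (f := fun k : ℕ => (k + 1)!)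
  case hi =>
    intro i j hij
    simp only at hij
    by_contra hne
    rcases Nat.lt_or_ge i j with h | h
    · exact absurd hij (Nat.ne_of_lt ((Nat.factorial_lt (by omega)).mpr (by omega)))
    · exact absurd hij.symm (Nat.ne_of_lt ((Nat.factorial_lt (by omega)).mpr (by omega)))
  case hf =>
    intro k
    show Pp _
    rw [Pp_iff]
    exact ⟨k + 1, 1, le_refl 1, by omega, (one_mul _).symm⟩

/-- uniqueness of the representation `m = r * k!` with `1 ≤ r ≤ k`. -/
lemma rep_unique {k1 r1 k2 r2 : ℕ} (h1 : 1 ≤ r1) (hk1 : r1 ≤ k1) (h2 : 1 ≤ r2)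
    (hk2 : r2 ≤ k2) (heq : r1 * k1 ! = r2 * k2 !) : k1 = k2 ∧ r1 = r2 := by
  have hb : ∀ k r : ℕ, 1 ≤ r → r ≤ k → k ! ≤ r * k ! ∧ r * k ! < (k+1)! := by
    intro k r hr hrk
    constructor
    · exact Nat.le_mul_of_pos_left _ hr
    · calc r * k ! ≤ k * k ! := Nat.mul_le_mul_right _ hrk
        _ < (k+1) * k ! := by
            have := Nat.factorial_pos k
            exact (Nat.mul_lt_mul_right this).mpr (by omega)
        _ = (k+1)! := (Nat.factorial_succ k).symm
  have hB1 := hb k1 r1 h1 hk1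
  have hB2 := hb k2 r2 h2 hk2
  have hkk : k1 = k2 := by
    by_contra hne
    rcases Nat.lt_or_ge k1 k2 with h | h
    · have : (k1+1)! ≤ k2 ! := Nat.factorial_le (by omega)
      omega
    · have : (k2+1)! ≤ k1 ! := Nat.factorial_le (by omega)
      omega
  subst hkk
  exact ⟨rfl, Nat.eq_of_mul_eq_mul_right (Nat.factorial_pos k1) heq⟩

/-- `a! * 2^t ≤ (a+t)!` for `a ≥ 1`. -/
lemma factorial_mul_two_pow_le (a : ℕ) (ha : 1 ≤ a) (t : ℕ) : a ! * 2 ^ t ≤ (a + t)! := by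
  induction t with
  | zero => simp
  | succ t ih =>
      have h2 : 2 ≤ a + t + 1 := by omega
      calc a ! * 2 ^ (t+1) = (a ! * 2 ^ t) * 2 := by ring
        _ ≤ (a + t)! * 2 := Nat.mul_le_mul_right _ ih
        _ ≤ (a + t)! * (a + t + 1) := Nat.mul_le_mul_left _ h2
        _ = (a + t + 1)! := by rw [Nat.factorial_succ]; ring

end SCF
namespace SCF

open Nat Set

/-- the gaps: `M i = 2^(i+2)`. -/
def MM (i : ℕ) : ℕ := 2 ^ (i + 2)

lemma MM_injective : Function.Injective MM := by
  intro i j h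
  simpa [MM, Nat.pow_left_injective] using Nat.pow_right_injective (le_refl 2) h

lemma MM_ge (i : ℕ) : 2 ^ i ≤ (MM i)! := by
  calc 2 ^ i ≤ 2 ^ (i + 2) := Nat.pow_le_pow_right (by norm_num) (by omega)
    _ ≤ (MM i)! := Nat.self_le_factorial _

lemma inv_MM_le (i : ℕ) : ((MM i)! : ℝ)⁻¹ ≤ (2⁻¹ : ℝ) ^ i := by
  rw [inv_pow]
  apply inv_anti₀ (by positivity)
  exact_mod_cast MM_ge i

/-- the summand function of `xS`. -/
def ff (S : Set ℕ) (i : ℕ) : ℝ := S.indicator (fun i => ((MM i)! : ℝ)⁻¹) i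

lemma ff_nonneg (S : Set ℕ) (i : ℕ) : 0 ≤ ff S i := by
  unfold ff
  apply Set.indicator_nonneg
  intro j _
  positivity

lemma ff_le (S : Set ℕ) (i : ℕ) : ff S i ≤ ((MM i)! : ℝ)⁻¹ := by
  unfold ff
  apply Set.indicator_le_self' 
  intro j _; positivity

lemma ff_le_geom (S : Set ℕ) (i : ℕ) : ff S i ≤ (2⁻¹ : ℝ) ^ i :=
  (ff_le S i).trans (inv_MM_le i)

lemma summable_of_le_geom {g : ℕ → ℝ} (c : ℝ) (h0 : ∀ i, 0 ≤ g i)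
    (h : ∀ i, g i ≤ c * 2⁻¹ ^ i) : Summable g :=
  Summable.of_nonneg_of_le h0 h
    ((summable_geometric_of_lt_one (by norm_num) (by norm_num)).mul_left c)

lemma summable_ff (S : Set ℕ) : Summable (ff S) :=
  summable_of_le_geom 1 (ff_nonneg S) (fun i => by simpa using ff_le_geom S i)

/-- the real number associated to `S ⊆ ℕ`. -/
def xS (S : Set ℕ) : ℝ := ∑' i, ff S i

lemma xS_nonneg (S : Set ℕ) : 0 ≤ xS S := tsum_nonneg (ff_nonneg S)

lemma xS_le_half (S : Set ℕ) : xS S ≤ 1/2 := by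
  have h1 : ∀ i, ff S i ≤ (1/4 : ℝ) * 2⁻¹ ^ i := by
    intro i
    refine (ff_le S i).trans ?_
    rw [show (1/4 : ℝ) * 2⁻¹ ^ i = (2⁻¹:ℝ)^(i+2) by ring]
    rw [inv_pow]
    apply inv_anti₀ (by positivity)
    exact_mod_cast Nat.self_le_factorial (MM i)
  calc xS S ≤ ∑' i, (1/4 : ℝ) * 2⁻¹ ^ i :=
        Summable.tsum_le_tsum h1 (summable_ff S)
          ((summable_geometric_of_lt_one (by norm_num) (by norm_num)).mul_left _)
    _ = (1/4) * (1 - 2⁻¹)⁻¹ := by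
        rw [tsum_mul_left, tsum_geometric_of_lt_one (by norm_num) (by norm_num)]
    _ = 1/2 := by norm_num

lemma xS_mem_Ico (S : Set ℕ) : xS S ∈ Set.Ico (0:ℝ) (0 + 1) := by
  constructor
  · exact xS_nonneg S
  · have := xS_le_half S; linarith

/-- tail comparison: `(MM (i + (k+1)))!⁻¹ ≤ (MM k)!⁻¹ * 4⁻¹ ^ (i+1)`. -/
lemma tail_term_le (k i : ℕ) :
    ((MM (i + (k+1)))! : ℝ)⁻¹ ≤ ((MM k)! : ℝ)⁻¹ * (4⁻¹ : ℝ) ^ (i+1) := by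
  have hnat : (MM k)! * 4 ^ (i+1) ≤ (MM (i + (k+1)))! := by
    have h1 : MM k + 2 * (i+1) ≤ MM (i + (k+1)) := by
      have e1 : MM (i + (k+1)) = 2 ^ (i+k+2) + 2 ^ (i+k+2) := by
        simp only [MM]
        rw [show i + (k+1) + 2 = (i+k+2)+1 by omega, pow_succ]
        ring
      have e2 : MM k ≤ 2 ^ (i+k+2) := Nat.pow_le_pow_right (by norm_num) (by omega)
      have e3 : 2 * (i+1) ≤ 2 ^ (i+k+2) := by
        have l := Nat.lt_two_pow_self (n := i+1)
        calc 2*(i+1) ≤ 2*2^(i+1) := by omega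
          _ = 2^(i+2) := by ring
          _ ≤ 2^(i+k+2) := Nat.pow_le_pow_right (by norm_num) (by omega)
      omega
    calc (MM k)! * 4 ^ (i+1) = (MM k)! * 2 ^ (2 * (i+1)) := by
          rw [show (4:ℕ) = 2^2 by norm_num, ← pow_mul]
      _ ≤ (MM k + 2 * (i+1))! := factorial_mul_two_pow_le (MM k) (Nat.one_le_iff_ne_zero.mpr (Nat.pos_iff_ne_zero.mp (Nat.pow_pos (by norm_num)))) _
      _ ≤ (MM (i + (k+1)))! := Nat.factorial_le h1
  have h0 : (0:ℝ) < ((MM k)! : ℝ) * 4 ^ (i+1) := by positivity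
  have hc : (((MM k)!) : ℝ) * 4 ^ (i+1) ≤ ((MM (i + (k+1)))! : ℝ) := by exact_mod_cast hnat
  calc ((MM (i + (k+1)))! : ℝ)⁻¹ ≤ (((MM k)! : ℝ) * 4 ^ (i+1))⁻¹ :=
        inv_anti₀ h0 hc
    _ = ((MM k)! : ℝ)⁻¹ * (4⁻¹:ℝ) ^ (i+1) := by rw [mul_inv, inv_pow]

end SCF
namespace SCF

open Nat Set

lemma tail_lt (S : Set ℕ) (k : ℕ) :
    ∑' i, ff S (i + (k+1)) < ((MM k)! : ℝ)⁻¹ := by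
  have hsum : Summable fun i => ff S (i + (k+1)) :=
    (summable_nat_add_iff (k+1)).mpr (summable_ff S)
  have hgeom : Summable fun i : ℕ => ((MM k)! : ℝ)⁻¹ * (4⁻¹:ℝ) ^ (i+1) := by
    have : Summable fun i : ℕ => (4⁻¹:ℝ) ^ (i+1) :=
      (summable_nat_add_iff 1).mpr (summable_geometric_of_lt_one (by norm_num) (by norm_num))
    exact this.mul_left _
  calc ∑' i, ff S (i + (k+1))
      ≤ ∑' i, ((MM k)! : ℝ)⁻¹ * (4⁻¹:ℝ) ^ (i+1) := by
        apply Summable.tsum_le_tsum _ hsum hgeom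
        intro i
        exact (ff_le S _).trans (tail_term_le k i)
    _ = ((MM k)! : ℝ)⁻¹ * ∑' i : ℕ, (4⁻¹:ℝ) ^ (i+1) := tsum_mul_left
    _ = ((MM k)! : ℝ)⁻¹ * (4⁻¹ * (1 - 4⁻¹)⁻¹) := by
        congr 1
        have : ∀ i : ℕ, (4⁻¹:ℝ) ^ (i+1) = 4⁻¹ * (4⁻¹:ℝ) ^ i := fun i => by ring
        rw [tsum_congr this, tsum_mul_left,
          tsum_geometric_of_lt_one (by norm_num) (by norm_num)]
    _ < ((MM k)! : ℝ)⁻¹ * 1 := by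
        apply mul_lt_mul_of_pos_left _ (by positivity)
        norm_num
    _ = ((MM k)! : ℝ)⁻¹ := mul_one _

lemma xS_lt_of_agree (S T : Set ℕ) (k : ℕ)
    (hagree : ∀ i < k, (i ∈ S ↔ i ∈ T)) (hkS : k ∈ S) (hkT : k ∉ T) :
    xS T < xS S := by
  have hS := Summable.sum_add_tsum_nat_add (f := ff S) (k+1) (summable_ff S)
  have hT := Summable.sum_add_tsum_nat_add (f := ff T) (k+1) (summable_ff T)
  have hsumeq : ∀ i ∈ Finset.range k, ff S i = ff T i := by
    intro i hi
    simp only [Finset.mem_range] at hi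
    unfold ff Set.indicator
    have := hagree i hi
    by_cases h : i ∈ S
    · rw [if_pos h, if_pos (this.mp h)]
    · rw [if_neg h, if_neg (fun hh => h (this.mpr hh))]
  have hrange : ∀ U : Set ℕ, ∑ i ∈ Finset.range (k+1), ff U i
      = ∑ i ∈ Finset.range k, ff U i + ff U k := fun U => Finset.sum_range_succ _ _
  have hffSk : ff S k = ((MM k)! : ℝ)⁻¹ := by
    unfold ff Set.indicator; rw [if_pos hkS]
  have hffTk : ff T k = 0 := by
    unfold ff Set.indicator; rw [if_neg hkT]
  have htailS : (0:ℝ) ≤ ∑' i, ff S (i + (k+1)) :=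
    tsum_nonneg (fun i => ff_nonneg S _)
  have htailT : ∑' i, ff T (i + (k+1)) < ((MM k)! : ℝ)⁻¹ := tail_lt T k
  have hcomm : ∑ i ∈ Finset.range k, ff S i = ∑ i ∈ Finset.range k, ff T i :=
    Finset.sum_congr rfl hsumeq
  calc xS T = ∑ i ∈ Finset.range (k+1), ff T i + ∑' i, ff T (i + (k+1)) := hT.symm
    _ = ∑ i ∈ Finset.range k, ff T i + ∑' i, ff T (i + (k+1)) := by
        rw [hrange, hffTk, add_zero]
    _ < ∑ i ∈ Finset.range k, ff S i + ((MM k)! : ℝ)⁻¹ := by rw [hcomm]; linarith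
    _ ≤ ∑ i ∈ Finset.range (k+1), ff S i + ∑' i, ff S (i + (k+1)) := by
        rw [hrange, hffSk]; linarith
    _ = xS S := hS

lemma xS_injective : Function.Injective xS := by
  intro S T heq
  by_contra hne
  obtain ⟨j, hj⟩ : ∃ i, ¬ (i ∈ S ↔ i ∈ T) := by
    by_contra h
    push_neg at h
    exact hne (Set.ext fun i => h i)
  have hD : {i : ℕ | ¬ (i ∈ S ↔ i ∈ T)}.Nonempty := ⟨j, hj⟩
  have hkmem : sInf {i : ℕ | ¬ (i ∈ S ↔ i ∈ T)} ∈ {i : ℕ | ¬ (i ∈ S ↔ i ∈ T)} :=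
    Nat.sInf_mem hD
  set k := sInf {i : ℕ | ¬ (i ∈ S ↔ i ∈ T)} with hkdef
  have hagree : ∀ i < k, (i ∈ S ↔ i ∈ T) := by
    intro i hi
    by_contra hcon
    have : k ≤ i := Nat.sInf_le hcon
    omega
  simp only [Set.mem_setOf_eq, iff_iff_implies_and_implies, not_and_or] at hkmem
  rcases hkmem with h | h
  · push_neg at h
    exact absurd heq (ne_of_gt (xS_lt_of_agree S T k hagree h.1 h.2))
  · push_neg at h
    exact absurd heq (ne_of_lt (xS_lt_of_agree T S k
      (fun i hi => (hagree i hi).symm) h.1 h.2))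

end SCF
namespace SCF

open Nat Set Classical in
lemma summable_shift_geom (c : ℕ) :
    Summable (fun t : ℕ => if c ≤ t then (2⁻¹:ℝ)^(t-c) else 0) := by
  apply summable_of_le_geom ((2:ℝ)^c)
  · intro t; positivity
  · intro t
    by_cases hct : c ≤ t
    · rw [if_pos hct]
      have ht : t - c + c = t := Nat.sub_add_cancel hct
      have heq : (2⁻¹:ℝ)^(t-c) = 2⁻¹^t * 2^c := by
        calc (2⁻¹:ℝ)^(t-c) = 2⁻¹^(t-c) * ((2⁻¹*2:ℝ))^c := by norm_num
          _ = 2⁻¹^(t-c) * (2⁻¹^c * 2^c) := by rw [mul_pow]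
          _ = (2⁻¹^(t-c) * 2⁻¹^c) * 2^c := by ring
          _ = 2⁻¹^t * 2^c := by rw [← pow_add, ht]
      rw [heq]
      exact le_of_eq (mul_comm _ _)
    · rw [if_neg hct]; positivity

open Nat Set Classical in
lemma tsum_shift_geom (c : ℕ) :
    ∑' t : ℕ, (if c ≤ t then (2⁻¹:ℝ)^(t-c) else 0) = 2 := by
  have hinj : Function.Injective (fun s : ℕ => s + c) := add_left_injective c
  have hsupp : Function.support (fun t : ℕ => if c ≤ t then (2⁻¹:ℝ)^(t-c) else 0)
      ⊆ Set.range (fun s : ℕ => s + c) := by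
    intro t ht
    simp only [Function.mem_support, ne_eq] at ht
    by_cases hct : c ≤ t
    · exact ⟨t - c, Nat.sub_add_cancel hct⟩
    · exact absurd (if_neg hct) ht
  have := Function.Injective.tsum_eq hinj
    (f := fun t : ℕ => if c ≤ t then (2⁻¹:ℝ)^(t-c) else 0) hsupp
  rw [← this]
  have : ∀ s : ℕ, (if c ≤ s + c then (2⁻¹:ℝ)^(s + c - c) else 0) = (2⁻¹:ℝ)^s := by
    intro s
    rw [if_pos (Nat.le_add_left c s), Nat.add_sub_cancel]
  rw [tsum_congr this, tsum_geometric_of_lt_one (by norm_num) (by norm_num)]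
  norm_num

open Nat Set Classical in
lemma norm_le_key (S : Set ℕ) (k r : ℕ) (hr1 : 1 ≤ r) (hrk : r ≤ k)
    (hgood : ∀ i, MM i ≠ k + 1) :
    ‖((r * k ! : ℕ) : ℤ) • ((xS S : ℝ) : AddCircle (1:ℝ))‖ ≤ 2 / ((k:ℝ) + 2) := by
  set m : ℕ := r * k ! with hm
  have hmle : (m:ℝ) ≤ ((k+1)! : ℝ) := by
    have : m ≤ (k+1)! := by
      calc m = r * k ! := hm
        _ ≤ k * k ! := Nat.mul_le_mul_right _ hrk
        _ ≤ (k+1) * k ! := Nat.mul_le_mul_right _ (by omega)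
        _ = (k+1)! := (Nat.factorial_succ k).symm
    exact_mod_cast this
  -- the pieces
  set A : ℕ → ℝ := fun i => if MM i ≤ k then (m:ℝ) * ff S i else 0 with hA
  set B : ℕ → ℝ := fun i => if MM i ≤ k then 0 else (m:ℝ) * ff S i with hB
  have hffS := ff_nonneg S
  have hAB : ∀ i, A i + B i = (m:ℝ) * ff S i := by
    intro i
    by_cases h : MM i ≤ k
    · simp only [hA, hB, if_pos h, add_zero]
    · simp only [hA, hB, if_neg h, zero_add]
  have hAnonneg : ∀ i, 0 ≤ A i := by
    intro i
    by_cases h : MM i ≤ k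
    · simp only [hA, if_pos h]
      exact mul_nonneg (Nat.cast_nonneg m) (hffS i)
    · simp only [hA, if_neg h]; exact le_refl _
  have hBnonneg : ∀ i, 0 ≤ B i := by
    intro i
    by_cases h : MM i ≤ k
    · simp only [hB, if_pos h]; exact le_refl _
    · simp only [hB, if_neg h]
      exact mul_nonneg (Nat.cast_nonneg m) (hffS i)
  have hAsummable : Summable A := by
    apply summable_of_le_geom (m:ℝ) hAnonneg
    intro i
    by_cases h : MM i ≤ k
    · simp only [hA, if_pos h]
      exact mul_le_mul_of_nonneg_left (ff_le_geom S i) (Nat.cast_nonneg m)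
    · simp only [hA, if_neg h]; positivity
  have hBsummable : Summable B := by
    apply summable_of_le_geom (m:ℝ) hBnonneg
    intro i
    by_cases h : MM i ≤ k
    · simp only [hB, if_pos h]; positivity
    · simp only [hB, if_neg h]
      exact mul_le_mul_of_nonneg_left (ff_le_geom S i) (Nat.cast_nonneg m)
  have hsplit : (m:ℝ) * xS S = (∑' i, A i) + (∑' i, B i) := by
    rw [xS, ← tsum_mul_left, ← Summable.tsum_add hAsummable hBsummable]
    exact tsum_congr (fun i => (hAB i).symm)
  -- ∑' A is a natural number
  obtain ⟨n0, hn0⟩ : ∃ n0 : ℕ, (∑' i, A i) = (n0:ℝ) := by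
    have hA0 : ∀ i ∉ Finset.range k, A i = 0 := by
      intro i hi
      simp only [Finset.mem_range, not_lt] at hi
      have : ¬ MM i ≤ k := by
        have h1 : i < 2^(i+2) := lt_of_lt_of_le (Nat.lt_two_pow_self (n := i))
          (Nat.pow_le_pow_right (by norm_num) (by omega))
        simp only [MM]; omega
      simp [hA, this]
    refine ⟨∑ i ∈ Finset.range k, if i ∈ S ∧ MM i ≤ k then m / (MM i)! else 0, ?_⟩
    rw [tsum_eq_sum hA0, Nat.cast_sum]
    apply Finset.sum_congr rfl
    intro i _
    by_cases hMi : MM i ≤ k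
    · by_cases hiS : i ∈ S
      · have hdvd : (MM i)! ∣ m := by
          calc (MM i)! ∣ k ! := Nat.factorial_dvd_factorial hMi
            _ ∣ r * k ! := dvd_mul_left _ _
        rw [if_pos ⟨hiS, hMi⟩]
        rw [Nat.cast_div hdvd (by positivity)]
        simp only [hA, if_pos hMi]
        unfold ff Set.indicator
        rw [if_pos hiS]
        rw [div_eq_mul_inv]
      · rw [if_neg (by tauto)]
        simp only [hA, if_pos hMi]
        unfold ff Set.indicator
        rw [if_neg hiS, mul_zero, Nat.cast_zero]
    · rw [if_neg (by tauto)]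
      simp [hA, hMi]
  -- the tail bound
  set h : ℕ → ℝ := fun t => if k+2 ≤ t then ((k+1)! : ℝ) * ((t ! : ℝ))⁻¹ else 0 with hh
  have hhnonneg : ∀ t, 0 ≤ h t := by
    intro t
    by_cases ht : k + 2 ≤ t
    · simp only [hh, if_pos ht]; positivity
    · simp only [hh, if_neg ht]; exact le_refl _
  have hfact_summable : Summable (fun t : ℕ => ((k+1)! : ℝ) * ((t ! : ℝ))⁻¹) := by
    have := Real.summable_pow_div_factorial 1
    simp only [one_pow, one_div] at this
    exact this.mul_left _
  have hhsummable : Summable h := by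
    apply Summable.of_nonneg_of_le hhnonneg _ hfact_summable
    intro t
    by_cases ht : k + 2 ≤ t
    · simp only [hh, if_pos ht]; exact le_refl _
    · simp only [hh, if_neg ht]; positivity
  have hBle : ∀ i, B i ≤ h (MM i) := by
    intro i
    by_cases hMi : MM i ≤ k
    · simp only [hB, if_pos hMi]; exact hhnonneg _
    · have hge : k + 2 ≤ MM i := by
        have := hgood i; omega
      simp only [hB, if_neg hMi, hh, if_pos hge]
      calc (m:ℝ) * ff S i ≤ (m:ℝ) * ((MM i)! : ℝ)⁻¹ :=
            mul_le_mul_of_nonneg_left (ff_le S i) (by positivity)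
        _ ≤ ((k+1)! : ℝ) * ((MM i)! : ℝ)⁻¹ :=
            mul_le_mul_of_nonneg_right hmle (by positivity)
  have hgsummable : Summable (fun i => h (MM i)) := by
    apply summable_of_le_geom ((k+1)! : ℝ)
    · intro i; exact hhnonneg _
    · intro i
      by_cases hge : k + 2 ≤ MM i
      · simp only [hh, if_pos hge]
        exact mul_le_mul_of_nonneg_left (inv_MM_le i) (by positivity)
      · simp only [hh, if_neg hge]; positivity
  have hstep1 : (∑' i, B i) ≤ ∑' i, h (MM i) :=
    Summable.tsum_le_tsum hBle hBsummable hgsummable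
  have hstep2 : (∑' i, h (MM i)) ≤ ∑' t, h t :=
    Summable.tsum_le_tsum_of_inj MM MM_injective (fun t _ => hhnonneg t)
      (fun i => le_refl _) hgsummable hhsummable
  set H : ℕ → ℝ := fun t => ((k:ℝ)+2)⁻¹ * (if k+2 ≤ t then (2⁻¹:ℝ)^(t-(k+2)) else 0) with hHdef
  have hHsummable : Summable H := (summable_shift_geom (k+2)).mul_left _
  have hstep3 : (∑' t, h t) ≤ ∑' t, H t := by
    apply Summable.tsum_le_tsum _ hhsummable hHsummable
    intro t
    by_cases ht : k + 2 ≤ t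
    · simp only [hh, hHdef, if_pos ht]
      set s := t - (k+2) with hs
      have hts : k + 2 + s = t := by omega
      have hnat : (k+1)! * ((k+2) * 2^s) ≤ t ! := by
        calc (k+1)! * ((k+2) * 2^s) = ((k+2) * (k+1)!) * 2^s := by ring
          _ = (k+2)! * 2^s := by rw [← Nat.factorial_succ]
          _ ≤ ((k+2) + s)! := factorial_mul_two_pow_le (k+2) (by omega) s
          _ = t ! := by rw [hts]
      have hc : ((k+1)! : ℝ) * (((k:ℝ)+2) * 2^s) ≤ ((t ! : ℕ) : ℝ) := by
        exact_mod_cast hnat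
      have h1 : ((t ! : ℕ):ℝ)⁻¹ ≤ (((k+1)! : ℝ) * (((k:ℝ)+2) * 2^s))⁻¹ :=
        inv_anti₀ (by positivity) hc
      calc ((k+1)!:ℝ) * ((t !:ℕ):ℝ)⁻¹
          ≤ ((k+1)!:ℝ) * (((k+1)!:ℝ) * (((k:ℝ)+2) * 2^s))⁻¹ :=
            mul_le_mul_of_nonneg_left h1 (by positivity)
        _ = (((k:ℝ)+2) * 2^s)⁻¹ := by
            rw [mul_inv, ← mul_assoc, mul_inv_cancel₀ (by positivity), one_mul]
        _ = ((k:ℝ)+2)⁻¹ * (2⁻¹:ℝ)^s := by rw [mul_inv, inv_pow]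
    · simp only [hh, hHdef, if_neg ht, mul_zero]
      exact le_refl _
  have hstep4 : (∑' t, H t) = 2 / ((k:ℝ)+2) := by
    rw [hHdef, tsum_mul_left, tsum_shift_geom (k+2)]
    ring
  -- assemble the AddCircle computation
  have hBnn : (0:ℝ) ≤ ∑' i, B i := tsum_nonneg hBnonneg
  have hcast : ((m : ℕ) : ℤ) • ((xS S : ℝ) : AddCircle (1:ℝ))
      = (((m:ℝ) * xS S : ℝ) : AddCircle (1:ℝ)) := by
    have h1 : ((m:ℝ) * xS S) = (((m:ℕ):ℤ):ℝ) * xS S := by push_cast; ring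
    rw [h1, QuotientAddGroup.mk_int_mul]
  have hzero : (((n0:ℝ) : ℝ) : AddCircle (1:ℝ)) = 0 := by
    rw [AddCircle.coe_eq_zero_iff]
    exact ⟨(n0:ℤ), by simp [zsmul_eq_mul]⟩
  have hcirc : ((m : ℕ) : ℤ) • ((xS S : ℝ) : AddCircle (1:ℝ))
      = (((∑' i, B i : ℝ)) : AddCircle (1:ℝ)) := by
    rw [hcast, hsplit, hn0]
    rw [show (((n0:ℝ) + ∑' i, B i : ℝ) : AddCircle (1:ℝ))
        = (((n0:ℝ) : ℝ) : AddCircle (1:ℝ)) + ((∑' i, B i : ℝ) : AddCircle (1:ℝ)) from rfl]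
    rw [hzero, zero_add]
  rw [hcirc]
  calc ‖((∑' i, B i : ℝ) : AddCircle (1:ℝ))‖ ≤ ‖(∑' i, B i : ℝ)‖ :=
        QuotientAddGroup.norm_mk_le_norm
    _ = ∑' i, B i := by rw [Real.norm_eq_abs, abs_of_nonneg hBnn]
    _ ≤ 2 / ((k:ℝ)+2) := by
        calc ∑' i, B i ≤ ∑' i, h (MM i) := hstep1
          _ ≤ ∑' t, h t := hstep2
          _ ≤ ∑' t, H t := hstep3
          _ = 2 / ((k:ℝ)+2) := hstep4

end SCF
namespace SCF

open Nat Set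

def dd : ℕ → ℕ := Nat.nth Pp

lemma dd_strictMono : StrictMono dd := Nat.nth_strictMono Pp_infinite

lemma dd_mem (n : ℕ) : Pp (dd n) := Nat.nth_mem_of_infinite Pp_infinite n

lemma dd_ge (n : ℕ) : n ≤ dd n := dd_strictMono.le_apply

open Classical in
lemma ncard_Pp_below (N : ℕ) : ({m | Pp m} ∩ Set.Iio (dd N)).ncard ≤ N := by
  have hsub : {m | Pp m} ∩ Set.Iio (dd N) ⊆ (fun n => dd n) '' Set.Iio N := by
    rintro m ⟨hm, hlt⟩
    have hnth : Nat.nth Pp (Nat.count Pp m) = m := Nat.nth_count hm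
    refine ⟨Nat.count Pp m, ?_, hnth⟩
    have hlt2 : dd (Nat.count Pp m) < dd N := by
      show Nat.nth Pp (Nat.count Pp m) < dd N
      rw [hnth]; exact hlt
    exact dd_strictMono.lt_iff_lt.mp hlt2
  calc ({m | Pp m} ∩ Set.Iio (dd N)).ncard
      ≤ ((fun n => dd n) '' Set.Iio N).ncard :=
        Set.ncard_le_ncard hsub ((Set.finite_Iio N).image _)
    _ ≤ (Set.Iio N).ncard := Set.ncard_image_le (Set.finite_Iio N)
    _ = N := by rw [← Finset.coe_Iio, Set.ncard_coe_finset, Nat.card_Iio]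

/-- the largest `j` with `j! ≤ M`. -/
def jf (Mq : ℕ) : ℕ := Nat.findGreatest (fun j => j ! ≤ Mq) Mq

lemma jf_fact_le {Mq : ℕ} (h : 1 ≤ Mq) : (jf Mq)! ≤ Mq := by
  have := Nat.findGreatest_spec (P := fun j => j ! ≤ Mq) (m := 0) (n := Mq)
    (Nat.zero_le _) (by simpa using h)
  exact this

lemma le_jf {k Mq : ℕ} (h : k ! ≤ Mq) : k ≤ jf Mq :=
  Nat.le_findGreatest (le_trans (Nat.self_le_factorial k) h) h

def W1 (K : ℕ) : Set ℕ := {m | ∃ k r : ℕ, k ≤ K ∧ 1 ≤ r ∧ r ≤ k ∧ m = r * k !}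

def W2 : Set ℕ := {m | ∃ i r : ℕ, 1 ≤ r ∧ r ≤ 2^(i+2) - 1 ∧ m = r * (2^(i+2) - 1)!}

lemma ncard_W1 (K Mq : ℕ) : (W1 K ∩ Set.Iio Mq).ncard ≤ (K+1) * (K+1) := by
  classical
  set F := (Finset.Iic K ×ˢ Finset.Iic K).image (fun p : ℕ × ℕ => p.2 * p.1 !) with hF
  have hsub : W1 K ∩ Set.Iio Mq ⊆ ↑F := by
    rintro m ⟨⟨k, r, hk, h1, h2, rfl⟩, _⟩
    simp only [hF, Finset.coe_image, Set.mem_image, Finset.mem_coe,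
      Finset.mem_product, Finset.mem_Iic]
    exact ⟨(k, r), ⟨hk, h2.trans hk⟩, rfl⟩
  calc (W1 K ∩ Set.Iio Mq).ncard ≤ (↑F : Set ℕ).ncard :=
        Set.ncard_le_ncard hsub F.finite_toSet
    _ = F.card := Set.ncard_coe_finset F
    _ ≤ ((Finset.Iic K ×ˢ Finset.Iic K)).card := Finset.card_image_le
    _ = (K+1) * (K+1) := by rw [Finset.card_product, Nat.card_Iic]

lemma ncard_W2 (Mq : ℕ) : (W2 ∩ Set.Iio Mq).ncard ≤ 2 * jf Mq + 2 := by
  classical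
  set j := jf Mq with hj
  set T : Set (ℕ × ℕ) := {p | 1 ≤ p.2 ∧ p.2 ≤ 2^(p.1+2) - 1 ∧ 2^(p.1+2) ≤ j + 1} with hT
  have hTfin : T.Finite := by
    apply Set.Finite.subset ((Set.finite_Iic j).prod (Set.finite_Iic j))
    rintro ⟨i, r⟩ ⟨h1, h2, h3⟩
    dsimp only at h1 h2 h3
    have hi : i < 2^(i+2) := lt_of_lt_of_le (Nat.lt_two_pow_self (n := i))
      (Nat.pow_le_pow_right (by norm_num) (by omega))
    exact ⟨by simp; omega, by simp; omega⟩
  have hsub : W2 ∩ Set.Iio Mq ⊆ (fun p : ℕ × ℕ => p.2 * (2^(p.1+2) - 1)!) '' T := by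
    rintro m ⟨⟨i, r, h1, h2, rfl⟩, hlt⟩
    have hpos : 1 ≤ 2^(i+2) := Nat.one_le_two_pow
    have hfle : (2^(i+2) - 1)! ≤ Mq := by
      calc (2^(i+2) - 1)! ≤ r * (2^(i+2) - 1)! := Nat.le_mul_of_pos_left _ h1
        _ ≤ Mq := le_of_lt hlt
    have hkj : 2^(i+2) - 1 ≤ j := le_jf hfle
    refine ⟨(i, r), ?_, rfl⟩
    simp only [hT, Set.mem_setOf_eq]
    exact ⟨h1, h2, by omega⟩
  have hmaps : ∀ p ∈ T, (fun p : ℕ × ℕ => 2^(p.1+2) + p.2) p ∈ Set.Iio (2 * j + 2) := by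
    rintro ⟨i, r⟩ ⟨h1, h2, h3⟩
    dsimp only at h1 h2 h3
    simp only [Set.mem_Iio]
    have hp : 1 ≤ 2^(i+2) := Nat.one_le_two_pow
    omega
  have hinj : Set.InjOn (fun p : ℕ × ℕ => 2^(p.1+2) + p.2) T := by
    rintro ⟨i1, r1⟩ ⟨g1, g2, g3⟩ ⟨i2, r2⟩ ⟨e1, e2, e3⟩ heq
    dsimp only at g1 g2 g3 e1 e2 e3 heq
    have hp1 : 1 ≤ 2^(i1+2) := Nat.one_le_two_pow
    have hp2 : 1 ≤ 2^(i2+2) := Nat.one_le_two_pow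
    have hii : i1 = i2 := by
      by_contra hne
      rcases Nat.lt_or_ge i1 i2 with h | h
      · have hle : 2^(i1+3) ≤ 2^(i2+2) := Nat.pow_le_pow_right (by norm_num) (by omega)
        have he : 2^(i1+3) = 2^(i1+2) + 2^(i1+2) := by rw [pow_succ]; ring
        omega
      · have h' : i2 < i1 := by omega
        have hle : 2^(i2+3) ≤ 2^(i1+2) := Nat.pow_le_pow_right (by norm_num) (by omega)
        have he : 2^(i2+3) = 2^(i2+2) + 2^(i2+2) := by rw [pow_succ]; ring
        omega
    subst hii
    have : r1 = r2 := by omega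
    simp [this]
  calc (W2 ∩ Set.Iio Mq).ncard
      ≤ ((fun p : ℕ × ℕ => p.2 * (2^(p.1+2) - 1)!) '' T).ncard :=
        Set.ncard_le_ncard hsub (hTfin.image _)
    _ ≤ T.ncard := Set.ncard_image_le hTfin
    _ ≤ (Set.Iio (2 * j + 2)).ncard :=
        Set.ncard_le_ncard_of_injOn _ hmaps hinj (Set.finite_Iio _)
    _ = 2 * j + 2 := by rw [← Finset.coe_Iio, Set.ncard_coe_finset, Nat.card_Iio]

lemma rect_le (N : ℕ) (h1 : 1 ≤ dd N) :
    (jf (dd N) - jf (dd N) / 2) * (jf (dd N) / 2) ≤ N := by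
  classical
  set j := jf (dd N) with hjdef
  set q := j / 2 with hq
  have hjf : j ! ≤ dd N := jf_fact_le h1
  set F := Finset.Icc q (j-1) ×ˢ Finset.Icc 1 q with hF
  have hcard : F.card = (j - q) * q := by
    rw [hF, Finset.card_product, Nat.card_Icc, Nat.card_Icc]
    rcases Nat.eq_zero_or_pos j with h0 | hpos
    · have hq0 : q = 0 := by rw [hq, h0]
      rw [hq0, h0]
    · have e1 : j - 1 + 1 - q = j - q := by omega
      have e2 : q + 1 - 1 = q := by omega
      rw [e1, e2]
  have hmaps : ∀ p ∈ (↑F : Set (ℕ × ℕ)),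
      (fun p : ℕ × ℕ => p.2 * p.1 !) p ∈ {m | Pp m} ∩ Set.Iio (dd N) := by
    rintro ⟨k, r⟩ hp
    simp only [hF, Finset.coe_product, Set.mem_prod, Finset.mem_coe,
      Finset.mem_Icc] at hp
    obtain ⟨⟨hqk, hkj⟩, hr1, hrq⟩ := hp
    have hrk : r ≤ k := le_trans hrq hqk
    constructor
    · rw [Set.mem_setOf_eq, Pp_iff]
      exact ⟨k, r, hr1, hrk, rfl⟩
    · simp only [Set.mem_Iio]
      have hkj1 : k + 1 ≤ j := by
        have := hq
        omega
      calc r * k ! ≤ k * k ! := Nat.mul_le_mul_right _ hrk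
        _ < (k+1) * k ! := (Nat.mul_lt_mul_right (Nat.factorial_pos k)).mpr (by omega)
        _ = (k+1)! := (Nat.factorial_succ k).symm
        _ ≤ j ! := Nat.factorial_le hkj1
        _ ≤ dd N := hjf
  have hinj : Set.InjOn (fun p : ℕ × ℕ => p.2 * p.1 !) (↑F : Set (ℕ × ℕ)) := by
    rintro ⟨k1, r1⟩ hp1 ⟨k2, r2⟩ hp2 heq
    simp only [hF, Finset.coe_product, Set.mem_prod, Finset.mem_coe,
      Finset.mem_Icc] at hp1 hp2
    simp only at heq
    obtain ⟨hk, hr⟩ := rep_unique hp1.2.1 (le_trans hp1.2.2 hp1.1.1)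
      hp2.2.1 (le_trans hp2.2.2 hp2.1.1) heq
    simp [hk, hr]
  calc (j - q) * q = F.card := hcard.symm
    _ = (↑F : Set (ℕ × ℕ)).ncard := (Set.ncard_coe_finset F).symm
    _ ≤ ({m | Pp m} ∩ Set.Iio (dd N)).ncard :=
        Set.ncard_le_ncard_of_injOn _ hmaps hinj
          (((Set.finite_Iio _).inter_of_right _))
    _ ≤ N := ncard_Pp_below N

end SCF
namespace SCF

open Nat Set

lemma density_of_cov (Bad : Set ℕ) (K : ℕ)
    (hcov : ∀ n ∈ Bad, dd n ∈ W1 K ∪ W2) : HasDensity Bad 0 := by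
  unfold HasDensity
  rw [Metric.tendsto_atTop]
  intro δ hδ
  set C := (K+1)*(K+1) with hC
  set J := ⌈24/δ⌉₊ + C + 10 with hJ
  refine ⟨J !, fun N hN => ?_⟩
  have hN1 : 1 ≤ N := le_trans (Nat.factorial_pos J) hN
  have hNd : N ≤ dd N := dd_ge N
  have hdN1 : 1 ≤ dd N := le_trans hN1 hNd
  have hJfact : J ! ≤ dd N := le_trans hN hNd
  set j := jf (dd N) with hjd
  have hJj : J ≤ j := le_jf hJfact
  set q := j / 2 with hq
  have hc1 : (Bad ∩ Set.Iio N).ncard ≤ ((W1 K ∪ W2) ∩ Set.Iio (dd N)).ncard := by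
    refine Set.ncard_le_ncard_of_injOn (fun n => dd n) ?_
      (fun a _ b _ h => dd_strictMono.injective h) ((Set.finite_Iio _).inter_of_right _)
    rintro n ⟨hn, hlt⟩
    exact ⟨hcov n hn, Set.mem_Iio.mpr (dd_strictMono (Set.mem_Iio.mp hlt))⟩
  have hc2 : ((W1 K ∪ W2) ∩ Set.Iio (dd N)).ncard ≤ C + (2*j + 2) := by
    rw [Set.union_inter_distrib_right]
    refine le_trans (Set.ncard_union_le _ _) ?_
    exact _root_.add_le_add (ncard_W1 K _) (ncard_W2 (dd N))
  have hrect : (j - q) * q ≤ N := rect_le N hdN1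
  have hCj : C + (2*j+2) ≤ 3*j := by omega
  have h3j : 3*j ≤ 12*q := by omega
  have hqq : q*q ≤ N := le_trans (Nat.mul_le_mul_right q (by omega : q ≤ j - q)) hrect
  have hcnt : (Bad ∩ Set.Iio N).ncard ≤ 12*q := le_trans hc1 (le_trans hc2 (le_trans hCj h3j))
  have hq1 : 1 ≤ q := by omega
  have hqR : (0:ℝ) < (q:ℝ) := by exact_mod_cast hq1
  have hNR : (0:ℝ) < (N:ℝ) := by exact_mod_cast hN1
  show dist (((Bad ∩ Set.Iio N).ncard : ℝ) / (N:ℝ)) 0 < δ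
  rw [Real.dist_eq, sub_zero, abs_of_nonneg (by positivity)]
  have hstep : ((Bad ∩ Set.Iio N).ncard : ℝ) / (N:ℝ) ≤ (12*(q:ℝ)) / ((q:ℝ)*(q:ℝ)) := by
    apply div_le_div₀ (by positivity) ?_ (by positivity) ?_
    · exact_mod_cast hcnt
    · exact_mod_cast hqq
  have heq2 : (12*(q:ℝ)) / ((q:ℝ)*(q:ℝ)) = 12 / (q:ℝ) := by
    field_simp
  have hfin : 12 / (q:ℝ) < δ := by
    rw [div_lt_iff₀ hqR]
    have hqbig : 12/δ < (q:ℝ) := by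
      have h1 : (24/δ : ℝ) ≤ (⌈24/δ⌉₊ : ℝ) := Nat.le_ceil _
      have h2 : (J:ℝ) = (⌈24/δ⌉₊ : ℝ) + (C:ℝ) + 10 := by rw [hJ]; push_cast; ring
      have h3 : (J:ℝ) ≤ (j:ℝ) := Nat.cast_le.mpr hJj
      have h4 : (j:ℝ) ≤ 2*(q:ℝ) + 1 := by exact_mod_cast (by omega : j ≤ 2*q+1)
      have hC0 : (0:ℝ) ≤ (C:ℝ) := Nat.cast_nonneg _
      have h24 : (24/δ:ℝ) = 2*(12/δ) := by ring
      linarith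
    calc (12:ℝ) = δ * (12/δ) := by field_simp
      _ < δ * (q:ℝ) := by exact mul_lt_mul_of_pos_left hqbig hδ
  calc ((Bad ∩ Set.Iio N).ncard : ℝ) / (N:ℝ) ≤ (12*(q:ℝ))/((q:ℝ)*(q:ℝ)) := hstep
    _ = 12/(q:ℝ) := heq2
    _ < δ := hfin

lemma y_mem (S : Set ℕ) :
    ((xS S : ℝ) : AddCircle (1:ℝ)) ∈ statChar (fun n => (dSeq Nat.factorial n : ℤ)) := by
  simp only [statChar, Set.mem_setOf_eq]
  intro ε hε
  set K := ⌈2/ε⌉₊ + 1 with hK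
  apply density_of_cov _ K
  intro n hn
  have hnn : ε ≤ ‖((dd n : ℕ) : ℤ) • ((xS S : ℝ) : AddCircle (1:ℝ))‖ := by
    have hdd : dSeq Nat.factorial n = dd n := by rw [dSeq_factorial_eq]; rfl
    have := hn
    simp only [Set.mem_setOf_eq, hdd] at this
    exact this
  obtain ⟨k, r, h1, h2, heq⟩ := (Pp_iff _).mp (dd_mem n)
  by_cases hkK : k ≤ K
  · exact Or.inl ⟨k, r, hkK, h1, h2, heq⟩
  · by_cases hpow : ∃ i, MM i = k + 1
    · obtain ⟨i, hi⟩ := hpow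
      simp only [MM] at hi
      refine Or.inr ⟨i, r, h1, by omega, ?_⟩
      have hk2 : k = 2^(i+2) - 1 := by omega
      rw [heq, hk2]
    · exfalso
      push_neg at hpow
      have hb := norm_le_key S k r h1 h2 hpow
      rw [heq] at hnn
      have hsmall : 2 / ((k:ℝ)+2) < ε := by
        rw [div_lt_iff₀ (by positivity)]
        have h1' : (2/ε : ℝ) ≤ (⌈2/ε⌉₊:ℝ) := Nat.le_ceil _
        have h2' : (K:ℝ) < (k:ℝ) := by exact_mod_cast (by omega : K < k)
        have h3' : (K:ℝ) = (⌈2/ε⌉₊:ℝ) + 1 := by rw [hK]; push_cast; ring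
        have hlt : (2/ε : ℝ) < (k:ℝ) + 2 := by linarith
        calc (2:ℝ) = ε * (2/ε) := by field_simp
          _ < ε * ((k:ℝ)+2) := mul_lt_mul_of_pos_left hlt hε
      linarith

end SCF

theorem statChar_factorial_continuum' :
    Cardinal.mk ↥(statChar (fun n => (dSeq Nat.factorial n : ℤ))) = Cardinal.continuum := by
  haveI : Fact ((0:ℝ) < 1) := ⟨one_pos⟩
  apply le_antisymm
  · have hsurj : Function.Surjective (fun x : ℝ => ((x : ℝ) : AddCircle (1:ℝ))) := by
      intro z
      induction z using QuotientAddGroup.induction_on with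
      | H x => exact ⟨x, rfl⟩
    calc Cardinal.mk ↥(statChar (fun n => (dSeq Nat.factorial n : ℤ)))
        ≤ Cardinal.mk (AddCircle (1:ℝ)) := Cardinal.mk_set_le _
      _ ≤ Cardinal.mk ℝ := Cardinal.mk_le_of_surjective hsurj
      _ = Cardinal.continuum := Cardinal.mk_real
  · have hinj : Function.Injective (fun S : Set ℕ =>
        (⟨((SCF.xS S : ℝ) : AddCircle (1:ℝ)), SCF.y_mem S⟩ :
          ↥(statChar (fun n => (dSeq Nat.factorial n : ℤ))))) := by
      intro S T h
      apply SCF.xS_injective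
      have h2 : ((SCF.xS S : ℝ) : AddCircle (1:ℝ)) = ((SCF.xS T : ℝ) : AddCircle (1:ℝ)) :=
        congrArg Subtype.val h
      exact (AddCircle.coe_eq_coe_iff_of_mem_Ico (SCF.xS_mem_Ico S) (SCF.xS_mem_Ico T)).mp h2
    calc Cardinal.continuum = Cardinal.mk (Set ℕ) := by
          rw [Cardinal.mk_set, Cardinal.mk_nat, Cardinal.two_power_aleph0]
      _ ≤ Cardinal.mk ↥(statChar (fun n => (dSeq Nat.factorial n : ℤ))) :=
          Cardinal.mk_le_of_injective hinj

/-- for `a n = n!`, the subgroup `t^s_{(d n)}(𝕋)` has cardinality continuum. -/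
theorem statChar_factorial_continuum :
    Cardinal.mk ↥(statChar (fun n => (dSeq Nat.factorial n : ℤ))) = Cardinal.continuum :=
  statChar_factorial_continuum'
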